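/- Let K ⊂ ℂ be compact, connected, and full, with fibers defined using a countable set Q of landing angles. If an external ray lands at a point z, its impression is contained in the fiber of z; for a ray whose angle is not in Q, the impression is contained in the fiber of any point of the impression. -/

import Mathlib

open Set Metric Filter Topology

/-- Image of the external ray of `K` at angle `θ` (in turns), where `ψ` is the
inverse of the normalized Riemann map, defined on `{|z| > 1}`. -/
noncomputable def rayImg (ψ : ℂ → ℂ) (θ : ℝ) : Set ℂ :=
  (fun r : ℝ => ψ ((r : ℂ) * Complex.exp (2 * Real.pi * θ * Complex.I))) '' Set.Ioi 1

/-- The external ray at angle `θ` lands at `z`. -/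
def Lands (ψ : ℂ → ℂ) (θ : ℝ) (z : ℂ) : Prop :=
  Filter.Tendsto (fun r : ℝ => ψ ((r : ℂ) * Complex.exp (2 * Real.pi * θ * Complex.I)))
    (nhdsWithin 1 (Set.Ioi 1)) (nhds z)

/-- `ψ` is the inverse of the normalized Riemann map of `ℂ ∖ K`: a conformal
bijection from the exterior of the closed unit disk onto `ℂ ∖ K`, tangent (up to a
positive real factor, the conformal radius) to the identity at infinity. -/
def IsRiemannMap (K : Set ℂ) (ψ : ℂ → ℂ) : Prop :=
  Set.BijOn ψ {z : ℂ | 1 < ‖z‖} Kᶜ ∧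
  DifferentiableOn ℂ ψ {z : ℂ | 1 < ‖z‖} ∧
  ∃ lam : ℝ, 0 < lam ∧
    Filter.Tendsto (fun z : ℂ => ψ z / z) (Filter.comap (fun z : ℂ => ‖z‖) Filter.atTop)
      (nhds (lam : ℂ))

/-- A set is full if its complement has no bounded connected components. -/
def IsFull (K : Set ℂ) : Prop :=
  ∀ w ∉ K, ¬ Bornology.IsBounded (connectedComponentIn Kᶜ w)

/-- A separation line for `K` with respect to the angle set `Q`: either two rays
with angles in `Q` landing at a common point, or two such rays landing at distinct
points joined by a simple arc through the interior of `K`. -/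
def IsSepLine (K : Set ℂ) (ψ : ℂ → ℂ) (Q : Set ℝ) (Γ : Set ℂ) : Prop :=
  ∃ θ₁ ∈ Q, ∃ θ₂ ∈ Q, ∃ z₁ z₂ : ℂ,
    Lands ψ θ₁ z₁ ∧ Lands ψ θ₂ z₂ ∧
    (θ₁ : AddCircle (1 : ℝ)) ≠ (θ₂ : AddCircle (1 : ℝ)) ∧
    ((z₁ = z₂ ∧ Γ = rayImg ψ θ₁ ∪ rayImg ψ θ₂ ∪ {z₁}) ∨
     (z₁ ≠ z₂ ∧ ∃ σ : ℝ → ℂ,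
        ContinuousOn σ (Set.Icc 0 1) ∧ Set.InjOn σ (Set.Icc 0 1) ∧
        σ 0 = z₁ ∧ σ 1 = z₂ ∧ σ '' Set.Ioo 0 1 ⊆ interior K ∧
        Γ = rayImg ψ θ₁ ∪ rayImg ψ θ₂ ∪ σ '' Set.Icc 0 1))

/-- Two points can be separated if some separation line avoiding both puts them in
different connected components of its complement. -/
def Separates (K : Set ℂ) (ψ : ℂ → ℂ) (Q : Set ℝ) (z z' : ℂ) : Prop :=
  ∃ Γ : Set ℂ, IsSepLine K ψ Q Γ ∧ z ∉ Γ ∧ z' ∉ Γ ∧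
    connectedComponentIn Γᶜ z ≠ connectedComponentIn Γᶜ z'

/-- The fiber of `z`: the connected component containing `z` of the set of points
of `K` that cannot be separated from `z`. -/
noncomputable def fiber (K : Set ℂ) (ψ : ℂ → ℂ) (Q : Set ℝ) (z : ℂ) : Set ℂ :=
  connectedComponentIn {w | w ∈ K ∧ ¬ Separates K ψ Q z w} z

/-- Limit set of the external ray at angle `θ`. -/
noncomputable def limitSet (K : Set ℂ) (ψ : ℂ → ℂ) (θ : ℝ) : Set ℂ :=
  closure (rayImg ψ θ) ∩ K

/-- Impression of the external ray at angle `θ`. -/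
noncomputable def impression (K : Set ℂ) (ψ : ℂ → ℂ) (θ : ℝ) : Set ℂ :=
  ⋂ (ε : ℝ) (_ : 0 < ε), closure (⋃ (φ : ℝ) (_ : |φ - θ| < ε), limitSet K ψ φ)

namespace ImpAux


noncomputable def pt (r φ : ℝ) : ℂ := (r : ℂ) * Complex.exp (2 * Real.pi * φ * Complex.I)

lemma two_pi_eq (φ : ℝ) : (2 * (Real.pi:ℂ) * (φ:ℂ) * Complex.I) = ((2*Real.pi*φ : ℝ) : ℂ) * Complex.I := by
  push_cast; ring

lemma abs_pt {r : ℝ} (hr : 0 ≤ r) (φ : ℝ) : ‖pt r φ‖ = r := by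
  unfold pt
  rw [two_pi_eq, norm_mul]
  simp [Complex.norm_exp, abs_of_nonneg hr]

lemma pt_mem {r : ℝ} (hr : 1 < r) (φ : ℝ) : pt r φ ∈ {z : ℂ | 1 < ‖z‖} := by
  simp only [mem_setOf_eq, abs_pt (by linarith : (0:ℝ) ≤ r)]; exact hr

lemma addCircle_eq_iff {a b : ℝ} : (a : AddCircle (1:ℝ)) = (b : AddCircle (1:ℝ)) ↔ ∃ n : ℤ, b = a + n := by
  rw [show ((a : AddCircle (1:ℝ)) = (b : AddCircle (1:ℝ))) ↔ -a + b ∈ AddSubgroup.zmultiples (1:ℝ) from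
    QuotientAddGroup.eq]
  simp only [AddSubgroup.mem_zmultiples_iff, zsmul_eq_mul, mul_one]
  constructor
  · rintro ⟨n, hn⟩; exact ⟨n, by linarith⟩
  · rintro ⟨n, hn⟩; exact ⟨n, by rw [hn]; ring⟩

lemma pt_eq_pt_of_circle {r : ℝ} {a b : ℝ} (h : (a : AddCircle (1:ℝ)) = (b : AddCircle (1:ℝ))) :
    pt r a = pt r b := by
  obtain ⟨n, rfl⟩ := addCircle_eq_iff.1 h
  unfold pt
  congr 1
  rw [Complex.exp_eq_exp_iff_exists_int]
  exact ⟨-n, by push_cast; ring⟩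

lemma circle_eq_of_pt_eq {r r' a b : ℝ} (hr : 0 < r) (hr' : 0 < r') (h : pt r a = pt r' b) :
    r = r' ∧ (a : AddCircle (1:ℝ)) = (b : AddCircle (1:ℝ)) := by
  have habs : r = r' := by
    have h2 := congrArg (fun z : ℂ => ‖z‖) h; rwa [abs_pt hr.le, abs_pt hr'.le] at h2
  subst habs
  refine ⟨rfl, ?_⟩
  have hr0 : (r:ℂ) ≠ 0 := by exact_mod_cast hr.ne'
  have hexp : Complex.exp (2*Real.pi*(a:ℂ)*Complex.I) = Complex.exp (2*Real.pi*(b:ℂ)*Complex.I) :=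
    mul_left_cancel₀ hr0 h
  rw [Complex.exp_eq_exp_iff_exists_int] at hexp
  obtain ⟨n, hn⟩ := hexp
  rw [addCircle_eq_iff]
  refine ⟨-n, ?_⟩
  have him := congrArg Complex.im hn
  rw [two_pi_eq a, two_pi_eq b] at him
  have h1 : (((2*Real.pi*a : ℝ) : ℂ) * Complex.I).im = 2*Real.pi*a := by simp
  have h2 : ((((2*Real.pi*b : ℝ)) : ℂ) * Complex.I + (n:ℂ) * (2 * (Real.pi:ℂ) * Complex.I)).im
      = 2*Real.pi*b + n * (2*Real.pi) := by
    simp [Complex.add_im, Complex.mul_im]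
  rw [h1, h2] at him
  have hπ := Real.pi_pos
  have : a = b + n := by nlinarith
  push_cast
  linarith

lemma joinedIn_abs_gt {R : ℝ} (hR : 0 ≤ R) {x y : ℂ} (hx : R < ‖x‖) (hy : R < ‖y‖) :
    JoinedIn {z : ℂ | R < ‖z‖} x y := by
  have hx0 : x ≠ 0 := by
    intro h; rw [h] at hx; simp at hx; linarith
  have hy0 : y ≠ 0 := by
    intro h; rw [h] at hy; simp at hy; linarith
  refine ⟨⟨⟨fun t => Complex.exp ((1 - ((t:ℝ):ℂ)) * Complex.log x + ((t:ℝ):ℂ) * Complex.log y), ?_⟩,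
    ?_, ?_⟩, ?_⟩
  · fun_prop
  · simp [Complex.exp_log hx0]
  · simp [Complex.exp_log hy0]
  · intro t
    show R < ‖Complex.exp _‖
    rw [Complex.norm_exp]
    have hre : ((1 - ((t:ℝ):ℂ)) * Complex.log x + ((t:ℝ):ℂ) * Complex.log y).re
        = (1 - (t:ℝ)) * Real.log (‖x‖) + (t:ℝ) * Real.log (‖y‖) := by
      simp [Complex.add_re, Complex.mul_re, Complex.log_re, Complex.sub_re, Complex.one_re,
        Complex.ofReal_re, Complex.ofReal_im, Complex.sub_im]
    rw [hre]
    obtain ⟨ht0, ht1⟩ := t.2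
    have habsx : 0 < ‖x‖ := lt_of_le_of_lt hR hx
    have habsy : 0 < ‖y‖ := lt_of_le_of_lt hR hy
    rcases le_total (Real.log (‖x‖)) (Real.log (‖y‖)) with hle | hle
    · have : Real.log (‖x‖) ≤ (1 - (t:ℝ)) * Real.log (‖x‖) + (t:ℝ) * Real.log (‖y‖) := by nlinarith
      calc R < ‖x‖ := hx
        _ = Real.exp (Real.log (‖x‖)) := (Real.exp_log habsx).symm
        _ ≤ _ := Real.exp_le_exp.2 this
    · have : Real.log (‖y‖) ≤ (1 - (t:ℝ)) * Real.log (‖x‖) + (t:ℝ) * Real.log (‖y‖) := by nlinarith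
      calc R < ‖y‖ := hy
        _ = Real.exp (Real.log (‖y‖)) := (Real.exp_log habsy).symm
        _ ≤ _ := Real.exp_le_exp.2 this

lemma isPreconnected_abs_gt (R : ℝ) (hR : 0 ≤ R) : IsPreconnected {z : ℂ | R < ‖z‖} := by
  have h1 : ((R+1 : ℝ):ℂ) ∈ {z : ℂ | R < ‖z‖} := by
    simp only [mem_setOf_eq, Complex.norm_real, Real.norm_eq_abs]
    rw [abs_of_nonneg (by linarith)]; linarith
  have : IsPathConnected {z : ℂ | R < ‖z‖} :=
    ⟨_, h1, fun {y} hy => joinedIn_abs_gt hR h1 hy⟩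
  exact this.isConnected.isPreconnected


def UU : Set ℂ := {z : ℂ | 1 < ‖z‖}

lemma isOpen_UU : IsOpen UU := isOpen_lt continuous_const continuous_norm


variable {K : Set ℂ} {ψ : ℂ → ℂ}

lemma open_map (hb : Set.BijOn ψ UU Kᶜ) (hd : DifferentiableOn ℂ ψ UU) :
    ∀ s ⊆ UU, IsOpen s → IsOpen (ψ '' s) := by
  rcases (hd.analyticOnNhd isOpen_UU).is_constant_or_isOpen (isPreconnected_abs_gt 1 zero_le_one)
    with ⟨w, hw⟩ | h
  · exfalso
    have h2 : ((2:ℝ):ℂ) ∈ UU := by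
      simp only [UU, mem_setOf_eq, Complex.norm_real, Real.norm_eq_abs]; rw [abs_of_nonneg] <;> norm_num
    have h3 : ((3:ℝ):ℂ) ∈ UU := by
      simp only [UU, mem_setOf_eq, Complex.norm_real, Real.norm_eq_abs]; rw [abs_of_nonneg] <;> norm_num
    have := hb.injOn h2 h3 (by rw [hw _ h2, hw _ h3])
    norm_num at this
  · exact h

lemma mem_image_closure (hb : Set.BijOn ψ UU Kᶜ) (hd : DifferentiableOn ℂ ψ UU)
    {A : Set ℂ} (hA : A ⊆ UU) {w : ℂ} (hw : w ∈ closure (ψ '' A)) (hwK : w ∉ K) :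
    ∃ u ∈ closure A ∩ UU, ψ u = w := by
  obtain ⟨u, hu, rfl⟩ := hb.surjOn (show w ∈ Kᶜ from hwK)
  refine ⟨u, ⟨?_, hu⟩, rfl⟩
  rw [_root_.mem_closure_iff]
  intro O hOopen hOu
  have hW : IsOpen (ψ '' (O ∩ UU)) :=
    open_map hb hd _ inter_subset_right (hOopen.inter isOpen_UU)
  have hwW : ψ u ∈ ψ '' (O ∩ UU) := ⟨u, ⟨hOu, hu⟩, rfl⟩
  rw [_root_.mem_closure_iff] at hw
  obtain ⟨p, hp1, hp2⟩ := hw _ hW hwW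
  obtain ⟨a, haA, rfl⟩ := hp2
  obtain ⟨o, ho, hoa⟩ := hp1
  have : o = a := hb.injOn ho.2 (hA haA) hoa
  exact ⟨a, this ▸ ho.1, haA⟩

lemma growth {lam : ℝ} (hlam : 0 < lam)
    (ht : Filter.Tendsto (fun z : ℂ => ψ z / z) (Filter.comap (fun z : ℂ => ‖z‖) Filter.atTop)
      (nhds (lam : ℂ))) :
    ∃ R₀ : ℝ, 2 ≤ R₀ ∧ ∀ v : ℂ, R₀ ≤ ‖v‖ → lam / 2 * ‖v‖ ≤ ‖ψ v‖ := by
  have hev : ∀ᶠ z in Filter.comap (fun z : ℂ => ‖z‖) Filter.atTop,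
      ‖ψ z / z - (lam:ℂ)‖ < lam / 2 := by
    have := Metric.tendsto_nhds.mp ht (lam/2) (by positivity)
    filter_upwards [this] with z hz
    rwa [Complex.dist_eq] at hz
  rw [Filter.eventually_comap] at hev
  rw [Filter.eventually_atTop] at hev
  obtain ⟨M, hM⟩ := hev
  refine ⟨max M 2, le_max_right _ _, fun v hv => ?_⟩
  have hv2 : (2:ℝ) ≤ ‖v‖ := le_trans (le_max_right _ _) hv
  have hvM : M ≤ ‖v‖ := le_trans (le_max_left _ _) hv
  have hv0 : v ≠ 0 := by
    intro h; rw [h] at hv2; simp at hv2; linarith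
  have h1 : ‖ψ v / v - (lam:ℂ)‖ < lam / 2 := hM _ hvM v rfl
  have h2 : lam / 2 ≤ ‖ψ v / v‖ := by
    have htri : ‖(lam:ℂ)‖ - ‖ψ v / v‖ ≤ ‖(lam:ℂ) - ψ v / v‖ := by
      simpa using norm_sub_norm_le ((lam:ℂ)) (ψ v / v)
    have habs : ‖(lam:ℂ) - ψ v / v‖ = ‖ψ v / v - (lam:ℂ)‖ :=
      norm_sub_rev _ _
    have hlamabs : ‖((lam:ℝ):ℂ)‖ = lam := by
      rw [Complex.norm_real, Real.norm_eq_abs, abs_of_pos hlam]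
    rw [habs] at htri
    rw [show ((lam:ℝ):ℂ) = (lam:ℂ) from rfl] at hlamabs
    linarith
  have h3 : ‖ψ v / v‖ = ‖ψ v‖ / ‖v‖ := norm_div _ _
  rw [h3] at h2
  rw [div_le_div_iff₀ (by positivity) (by linarith)] at h2
  calc lam / 2 * ‖v‖ ≤ ‖ψ v‖ * 1 := by linarith
    _ = ‖ψ v‖ := mul_one _




lemma bounded_near (hb : Set.BijOn ψ UU Kᶜ) (hd : DifferentiableOn ℂ ψ UU) (hK : IsCompact K)
    {R₀ : ℝ} (hR₀2 : 2 ≤ R₀) {lam : ℝ} (hlam : 0 < lam)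
    (hgrowth : ∀ v : ℂ, R₀ ≤ ‖v‖ → lam / 2 * ‖v‖ ≤ ‖ψ v‖) :
    ∃ Rb : ℝ, ∀ v : ℂ, 1 < ‖v‖ → ‖v‖ ≤ 3 → ‖ψ v‖ ≤ Rb := by
  classical
  set A : Set ℂ := {z : ℂ | R₀ + 1 < ‖z‖} with hA_def
  have hAU : A ⊆ UU := fun z hz => by
    simp only [UU, mem_setOf_eq]; simp only [A, mem_setOf_eq] at hz; linarith
  have hAopen : IsOpen A := isOpen_lt continuous_const continuous_norm
  have hψAopen : IsOpen (ψ '' A) := open_map hb hd _ hAU hAopen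
  -- the circle
  set C : Set ℂ := Metric.sphere (0:ℂ) (R₀+1) with hC_def
  have hCU : C ⊆ UU := fun z hz => by
    simp only [UU, mem_setOf_eq]
    have : ‖z‖ = R₀ + 1 := by
      have h := mem_sphere_iff_norm.1 hz
      simpa using h
    linarith
  have hCcomp : IsCompact (ψ '' C) :=
    (isCompact_sphere _ _).image_of_continuousOn (hd.continuousOn.mono hCU)
  obtain ⟨M₁, hM₁⟩ := hCcomp.isBounded.subset_closedBall 0
  obtain ⟨RK, hRK⟩ := hK.isBounded.subset_closedBall 0
  set R : ℝ := max (max M₁ RK) 0 + 1 with hR_def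
  have hR0 : 0 ≤ R := by positivity
  have hRM₁ : M₁ < R := by
    have := le_max_left M₁ RK; have := le_max_left (max M₁ RK) 0; simp only [hR_def]
    have h := le_max_left M₁ RK
    nlinarith [le_max_left (max M₁ RK) 0, le_max_left M₁ RK]
  have hRRK : RK < R := by
    nlinarith [le_max_left (max M₁ RK) 0, le_max_right M₁ RK]
  set V : Set ℂ := {w : ℂ | R < ‖w‖} with hV_def
  have hVpre : IsPreconnected V := isPreconnected_abs_gt R hR0
  -- a point of V ∩ ψ '' A
  set ρ : ℝ := max (R₀ + 2) (2 * (R + 1) / lam) with hρ_def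
  have hρA : ((ρ:ℝ):ℂ) ∈ A := by
    simp only [A, mem_setOf_eq, Complex.norm_real, Real.norm_eq_abs]
    rw [abs_of_nonneg (by positivity)]
    have := le_max_left (R₀ + 2) (2 * (R + 1) / lam); linarith
  have hρabs : ‖((ρ:ℝ):ℂ)‖ = ρ := by
    rw [Complex.norm_real, Real.norm_eq_abs, abs_of_nonneg (by positivity)]
  have hψρV : ψ ((ρ:ℝ):ℂ) ∈ V := by
    simp only [V, mem_setOf_eq]
    have h1 : lam / 2 * ρ ≤ ‖ψ ((ρ:ℝ):ℂ)‖ := by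
      have := hgrowth ((ρ:ℝ):ℂ) (by rw [hρabs]; exact le_trans (by linarith) (le_max_left _ _))
      rwa [hρabs] at this
    have h2 : R + 1 ≤ lam / 2 * ρ := by
      have := le_max_right (R₀ + 2) (2 * (R + 1) / lam)
      have hρge : 2 * (R + 1) / lam ≤ ρ := this
      calc R + 1 = lam / 2 * (2 * (R + 1) / lam) := by field_simp
        _ ≤ lam / 2 * ρ := by nlinarith
    linarith
  -- V ∩ closure (ψ '' A) ⊆ ψ '' A
  have claim1 : V ∩ closure (ψ '' A) ⊆ ψ '' A := by
    rintro p ⟨hpV, hpcl⟩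
    have hpK : p ∉ K := by
      intro hpK
      have := hRK hpK
      simp only [mem_closedBall, Complex.dist_eq, sub_zero] at this
      simp only [V, mem_setOf_eq] at hpV
      linarith
    obtain ⟨u, ⟨hucl, huU⟩, rfl⟩ := mem_image_closure hb hd hAU hpcl hpK
    have huabs : R₀ + 1 ≤ ‖u‖ := by
      have hsub : closure A ⊆ {z : ℂ | R₀ + 1 ≤ ‖z‖} :=
        closure_minimal (fun z hz => le_of_lt (by simpa [A] using hz))
          (isClosed_le continuous_const continuous_norm)
      exact hsub hucl
    rcases eq_or_lt_of_le huabs with heq | hlt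
    · exfalso
      have huC : u ∈ C := by
        rw [hC_def, mem_sphere_iff_norm]
        simpa using heq.symm
      have : ψ u ∈ ψ '' C := ⟨u, huC, rfl⟩
      have := hM₁ this
      simp only [mem_closedBall, Complex.dist_eq, sub_zero] at this
      simp only [V, mem_setOf_eq] at hpV
      linarith
    · exact ⟨u, hlt, rfl⟩
  -- V ⊆ ψ '' A
  have claim2 : V ⊆ ψ '' A := by
    intro v hv
    rcases Classical.em (v ∈ closure (ψ '' A)) with hc | hc
    · exact claim1 ⟨hv, hc⟩
    · exfalso
      have hcov : V ⊆ ψ '' A ∪ (closure (ψ '' A))ᶜ := by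
        intro x hx
        rcases Classical.em (x ∈ closure (ψ '' A)) with h | h
        · exact Or.inl (claim1 ⟨hx, h⟩)
        · exact Or.inr h
      have hne1 : (V ∩ ψ '' A).Nonempty := ⟨_, hψρV, ⟨_, hρA, rfl⟩⟩
      have hne2 : (V ∩ (closure (ψ '' A))ᶜ).Nonempty := ⟨v, hv, hc⟩
      obtain ⟨x, _, hx1, hx2⟩ :=
        hVpre _ _ hψAopen isClosed_closure.isOpen_compl hcov hne1 hne2
      exact hx2 (subset_closure hx1)
  refine ⟨R, fun v hv1 hv3 => ?_⟩
  by_contra hgt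
  push_neg at hgt
  have : ψ v ∈ V := hgt
  obtain ⟨a, haA, ha⟩ := claim2 this
  have : a = v := hb.injOn (hAU haA) hv1 ha
  rw [this] at haA
  simp only [A, mem_setOf_eq] at haA
  linarith

lemma preconnected_iInter {E : ℕ → Set ℂ} (hcomp : ∀ n, IsCompact (E n))
    (hconn : ∀ n, IsPreconnected (E n)) (hne : ∀ n, (E n).Nonempty)
    (hanti : ∀ m n, m ≤ n → E n ⊆ E m) : IsPreconnected (⋂ n, E n) := by
  classical
  set X := ⋂ n, E n with hX_def
  intro u v hu hv hcov hne1 hne2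
  obtain ⟨a, haX, hau⟩ := hne1
  obtain ⟨b, hbX, hbv⟩ := hne2
  by_contra hemp
  rw [Set.not_nonempty_iff_eq_empty] at hemp
  have hXc : IsClosed X := isClosed_iInter fun n => (hcomp n).isClosed
  have hXu_eq : X ∩ u = X \ v := by
    ext x
    constructor
    · rintro ⟨h1, h2⟩
      refine ⟨h1, fun hv' => ?_⟩
      have : x ∈ X ∩ (u ∩ v) := ⟨h1, h2, hv'⟩
      rw [hemp] at this; exact this
    · rintro ⟨h1, h2⟩
      exact ⟨h1, (hcov h1).resolve_right h2⟩
  have hXv_eq : X ∩ v = X \ u := by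
    ext x
    constructor
    · rintro ⟨h1, h2⟩
      refine ⟨h1, fun hu' => ?_⟩
      have : x ∈ X ∩ (u ∩ v) := ⟨h1, hu', h2⟩
      rw [hemp] at this; exact this
    · rintro ⟨h1, h2⟩
      exact ⟨h1, (hcov h1).resolve_left h2⟩
  have hXsub : X ⊆ E 0 := iInter_subset _ 0
  have hAcomp : IsCompact (X ∩ u) := by
    rw [hXu_eq]
    exact (hcomp 0).of_isClosed_subset (hXc.sdiff hv) fun x hx => hXsub hx.1
  have hBcomp : IsCompact (X ∩ v) := by
    rw [hXv_eq]
    exact (hcomp 0).of_isClosed_subset (hXc.sdiff hu) fun x hx => hXsub hx.1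
  have hdis : Disjoint (X ∩ u) (X ∩ v) := by
    rw [Set.disjoint_left]
    rintro x ⟨h1, h2⟩ ⟨h3, h4⟩
    have : x ∈ X ∩ (u ∩ v) := ⟨h1, h2, h4⟩
    rw [hemp] at this; exact this
  obtain ⟨u', v', hu', hv', hsubu, hsubv, hdisj⟩ :=
    SeparatedNhds.of_isCompact_isCompact hAcomp hBcomp hdis
  have hEn : ∃ n, E n ⊆ u' ∪ v' := by
    by_contra hno
    push_neg at hno
    have hne' : ∀ n, (E n ∩ (u' ∪ v')ᶜ).Nonempty := fun n => by
      obtain ⟨x, hx1, hx2⟩ := not_subset.mp (hno n)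
      exact ⟨x, hx1, hx2⟩
    have hdir : Directed (fun x1 x2 : Set ℂ => x1 ⊇ x2) fun n => E n ∩ (u' ∪ v')ᶜ := by
      intro m n
      refine ⟨max m n, ?_, ?_⟩
      · exact inter_subset_inter_left _ (hanti _ _ (le_max_left _ _))
      · exact inter_subset_inter_left _ (hanti _ _ (le_max_right _ _))
    have hcl : IsClosed ((u' ∪ v')ᶜ) := (hu'.union hv').isClosed_compl
    obtain ⟨x, hx⟩ := IsCompact.nonempty_iInter_of_directed_nonempty_isCompact_isClosed
      (fun n => E n ∩ (u' ∪ v')ᶜ) hdir hne'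
      (fun n => (hcomp n).inter_right hcl)
      (fun n => (hcomp n).isClosed.inter hcl)
    have hxX : x ∈ X := mem_iInter.2 fun n => (mem_iInter.1 hx n).1
    have hxuv : x ∈ u' ∪ v' := by
      rcases hcov hxX with h | h
      · exact Or.inl (hsubu ⟨hxX, h⟩)
      · exact Or.inr (hsubv ⟨hxX, h⟩)
    exact (mem_iInter.1 hx 0).2 hxuv
  obtain ⟨n, hn⟩ := hEn
  have h1 : (E n ∩ u').Nonempty := ⟨a, mem_iInter.1 haX n, hsubu ⟨haX, hau⟩⟩
  have h2 : (E n ∩ v').Nonempty := ⟨b, mem_iInter.1 hbX n, hsubv ⟨hbX, hbv⟩⟩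
  obtain ⟨x, _, hx2, hx3⟩ := hconn n u' v' hu' hv' hn h1 h2
  exact Set.disjoint_left.mp hdisj hx2 hx3





noncomputable def SF (ψ : ℂ → ℂ) (θ ε : ℝ) : Set ℂ :=
  (fun p : ℝ × ℝ => ψ (pt p.1 p.2)) '' (Set.Ioi 1 ×ˢ Set.Ioo (θ-ε) (θ+ε))
noncomputable def SS (ψ : ℂ → ℂ) (θ ε δ : ℝ) : Set ℂ :=
  (fun p : ℝ × ℝ => ψ (pt p.1 p.2)) '' (Set.Ioo 1 (1+δ) ×ˢ Set.Ioo (θ-ε) (θ+ε))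

lemma SS_subset_SF {θ ε δ : ℝ} : SS ψ θ ε δ ⊆ SF ψ θ ε :=
  image_mono (Set.prod_mono Ioo_subset_Ioi_self subset_rfl)

lemma SF_mono {θ ε ε' : ℝ} (h : ε ≤ ε') : SF ψ θ ε ⊆ SF ψ θ ε' :=
  image_mono (Set.prod_mono subset_rfl (Ioo_subset_Ioo (by linarith) (by linarith)))

lemma SS_mono {θ ε ε' δ δ' : ℝ} (h : ε ≤ ε') (h' : δ ≤ δ') : SS ψ θ ε δ ⊆ SS ψ θ ε' δ' :=
  image_mono (Set.prod_mono (Ioo_subset_Ioo le_rfl (by linarith))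
    (Ioo_subset_Ioo (by linarith) (by linarith)))

lemma SF_subset_compl (hb : Set.BijOn ψ UU Kᶜ) {θ ε : ℝ} : SF ψ θ ε ⊆ Kᶜ := by
  rintro x ⟨⟨r, φ⟩, ⟨hr, _⟩, rfl⟩
  exact hb.mapsTo (pt_mem hr φ)

lemma cont_pt : Continuous fun p : ℝ × ℝ => pt p.1 p.2 := by
  unfold pt; fun_prop

lemma contOn (hd : DifferentiableOn ℂ ψ UU) {s : Set (ℝ × ℝ)} (hs : ∀ p ∈ s, 1 < p.1) :
    ContinuousOn (fun p : ℝ × ℝ => ψ (pt p.1 p.2)) s :=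
  hd.continuousOn.comp cont_pt.continuousOn fun p hp => pt_mem (hs p hp) _

lemma SF_preconnected (hd : DifferentiableOn ℂ ψ UU) {θ ε : ℝ} : IsPreconnected (SF ψ θ ε) :=
  (isPreconnected_Ioi.prod isPreconnected_Ioo).image _
    (contOn hd fun p hp => hp.1)

lemma SS_preconnected (hd : DifferentiableOn ℂ ψ UU) {θ ε δ : ℝ} : IsPreconnected (SS ψ θ ε δ) :=
  (isPreconnected_Ioo.prod isPreconnected_Ioo).image _
    (contOn hd fun p hp => hp.1.1)

lemma SS_nonempty {θ ε δ : ℝ} (hε : 0 < ε) (hδ : 0 < δ) : (SS ψ θ ε δ).Nonempty :=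
  ⟨_, ⟨(1 + δ/2, θ), ⟨⟨by linarith, by linarith⟩, ⟨by linarith, by linarith⟩⟩, rfl⟩⟩

lemma ray_subset_SF {θ ε φ : ℝ} (hφ : |φ - θ| < ε) : rayImg ψ φ ⊆ SF ψ θ ε := by
  rintro x ⟨r, hr, rfl⟩
  have h := abs_lt.1 hφ
  exact ⟨(r, φ), ⟨hr, ⟨by linarith [h.1], by linarith [h.2]⟩⟩, rfl⟩

lemma SS_bounded {Rb : ℝ} (hRb : ∀ v : ℂ, 1 < ‖v‖ → ‖v‖ ≤ 3 → ‖ψ v‖ ≤ Rb)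
    {θ ε δ : ℝ} (hδ : δ ≤ 2) : ∀ x ∈ SS ψ θ ε δ, ‖x‖ ≤ Rb := by
  rintro x ⟨⟨r, φ⟩, ⟨⟨hr1, hr2⟩, _⟩, rfl⟩
  have h0 : (0:ℝ) ≤ r := by linarith
  exact hRb _ (by rw [abs_pt h0]; exact hr1) (by rw [abs_pt h0]; linarith)

lemma SS_closure_compact {Rb : ℝ}
    (hRb : ∀ v : ℂ, 1 < ‖v‖ → ‖v‖ ≤ 3 → ‖ψ v‖ ≤ Rb)
    {θ ε δ : ℝ} (hδ : δ ≤ 2) : IsCompact (closure (SS ψ θ ε δ)) := by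
  refine IsCompact.of_isClosed_subset (isCompact_closedBall (0:ℂ) Rb) isClosed_closure ?_
  refine closure_minimal (fun x hx => ?_) Metric.isClosed_closedBall
  rw [mem_closedBall, Complex.dist_eq, sub_zero]
  exact SS_bounded hRb hδ x hx

lemma closure_far_inter_K (hb : Set.BijOn ψ UU Kᶜ) (hd : DifferentiableOn ℂ ψ UU)
    (hK : IsCompact K) {lam R₀ : ℝ} (hlam : 0 < lam) (hR₀2 : 2 ≤ R₀)
    (hgrowth : ∀ v : ℂ, R₀ ≤ ‖v‖ → lam / 2 * ‖v‖ ≤ ‖ψ v‖)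
    {δ : ℝ} (hδ : 0 < δ) :
    closure (ψ '' {v : ℂ | 1 + δ ≤ ‖v‖}) ∩ K = ∅ := by
  by_contra hne
  rw [← Set.not_nonempty_iff_eq_empty, not_not] at hne
  obtain ⟨q, hqcl, hqK⟩ := hne
  obtain ⟨RK, hRK⟩ := hK.isBounded.subset_closedBall 0
  have hqabs : ‖q‖ ≤ RK := by
    have := hRK hqK; rwa [mem_closedBall, Complex.dist_eq, sub_zero] at this
  set T : Set ℂ := {v : ℂ | 1 + δ ≤ ‖v‖} with hT_def
  set Rmax : ℝ := max R₀ (2 * (RK + 1) / lam) with hRmax_def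
  set T' : Set ℂ := T ∩ Metric.closedBall 0 Rmax with hT'_def
  have hT'U : T' ⊆ UU := fun v hv => by
    simp only [UU, mem_setOf_eq]
    have := hv.1; simp only [T, mem_setOf_eq] at this; linarith
  have hT'comp : IsCompact T' := IsCompact.of_isClosed_subset (isCompact_closedBall _ _)
    ((isClosed_le continuous_const continuous_norm).inter Metric.isClosed_closedBall)
    inter_subset_right
  have hψT' : IsCompact (ψ '' T') := hT'comp.image_of_continuousOn (hd.continuousOn.mono hT'U)
  -- split
  have hsplit : ψ '' T ⊆ ψ '' T' ∪ (Metric.ball q 1)ᶜ := by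
    rintro x ⟨v, hvT, rfl⟩
    rcases Classical.em (ψ v ∈ Metric.ball q 1) with hball | hball
    · left
      have habs : ‖ψ v‖ < RK + 1 := by
        have := mem_ball.1 hball; rw [Complex.dist_eq] at this
        have htri : ‖ψ v‖ - ‖q‖ ≤ ‖ψ v - q‖ := by
          simpa using norm_sub_norm_le (ψ v) q
        linarith
      have hvRmax : ‖v‖ ≤ Rmax := by
        rcases le_or_gt (‖v‖) R₀ with h | h
        · exact le_trans h (le_max_left _ _)
        · have hg := hgrowth v h.le
          have : ‖v‖ ≤ 2 * (RK + 1) / lam := by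
            rw [le_div_iff₀ hlam]; nlinarith
          exact le_trans this (le_max_right _ _)
      exact ⟨v, ⟨hvT, by rwa [mem_closedBall, Complex.dist_eq, sub_zero]⟩, rfl⟩
    · right; exact hball
  have hclsub : closure (ψ '' T) ⊆ ψ '' T' ∪ (Metric.ball q 1)ᶜ :=
    closure_minimal hsplit (hψT'.isClosed.union (Metric.isOpen_ball).isClosed_compl)
  rcases hclsub hqcl with h | h
  · obtain ⟨v, hvT', hv⟩ := h
    exact (hb.mapsTo (hT'U hvT')) (hv ▸ hqK)
  · exact h (mem_ball_self one_pos)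

lemma closure_SF_inter_K_subset (hb : Set.BijOn ψ UU Kᶜ) (hd : DifferentiableOn ℂ ψ UU)
    (hK : IsCompact K) {lam R₀ : ℝ} (hlam : 0 < lam) (hR₀2 : 2 ≤ R₀)
    (hgrowth : ∀ v : ℂ, R₀ ≤ ‖v‖ → lam / 2 * ‖v‖ ≤ ‖ψ v‖)
    {θ ε δ : ℝ} (hδ : 0 < δ) :
    closure (SF ψ θ ε) ∩ K ⊆ closure (SS ψ θ ε δ) := by
  have hsplit : SF ψ θ ε ⊆ SS ψ θ ε δ ∪ ψ '' {v : ℂ | 1 + δ ≤ ‖v‖} := by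
    rintro x ⟨⟨r, φ⟩, ⟨hr, hφ⟩, rfl⟩
    rcases lt_or_ge r (1 + δ) with h | h
    · exact Or.inl ⟨(r, φ), ⟨⟨hr, h⟩, hφ⟩, rfl⟩
    · refine Or.inr ⟨pt r φ, ?_, rfl⟩
      simp only [mem_setOf_eq]
      rw [abs_pt (by simp only [mem_Ioi] at hr; linarith : (0:ℝ) ≤ r)]
      exact h
  intro x hx
  have h1 : x ∈ closure (SS ψ θ ε δ) ∪ closure (ψ '' {v : ℂ | 1 + δ ≤ ‖v‖}) := by
    rw [← closure_union]
    exact closure_mono hsplit hx.1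
  rcases h1 with h | h
  · exact h
  · exfalso
    have : x ∈ closure (ψ '' {v : ℂ | 1 + δ ≤ ‖v‖}) ∩ K := ⟨h, hx.2⟩
    rw [closure_far_inter_K hb hd hK hlam hR₀2 hgrowth hδ] at this
    exact this

lemma lands_mem_K (hb : Set.BijOn ψ UU Kᶜ) (hd : DifferentiableOn ℂ ψ UU)
    {φ : ℝ} {x : ℂ} (hl : Lands ψ φ x) : x ∈ K := by
  by_contra hxK
  obtain ⟨u, huU, rfl⟩ := hb.surjOn (show x ∈ Kᶜ from hxK)
  have huabs : 1 < ‖u‖ := huU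
  set s : ℝ := (‖u‖ - 1) / 2 with hs_def
  have hs : 0 < s := by simp only [hs_def]; linarith
  have hW : IsOpen (ψ '' (Metric.ball u s ∩ UU)) :=
    open_map hb hd _ inter_subset_right (Metric.isOpen_ball.inter
      (isOpen_lt continuous_const continuous_norm))
  have hmem : ψ u ∈ ψ '' (Metric.ball u s ∩ UU) := ⟨u, ⟨mem_ball_self hs, huU⟩, rfl⟩
  have hl' : Filter.Tendsto (fun r : ℝ => ψ (pt r φ)) (nhdsWithin 1 (Set.Ioi 1)) (nhds (ψ u)) := hl
  have hev1 : ∀ᶠ r in nhdsWithin (1:ℝ) (Set.Ioi 1), ψ (pt r φ) ∈ ψ '' (Metric.ball u s ∩ UU) :=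
    hl' (hW.mem_nhds hmem)
  set c : ℝ := (‖u‖ + 1) / 2 with hc_def
  have hc1 : 1 < c := by simp only [hc_def]; linarith
  have hev2 : ∀ᶠ r in nhdsWithin (1:ℝ) (Set.Ioi 1), r ∈ Set.Ioo 1 c :=
    Ioo_mem_nhdsGT_of_mem ⟨le_refl 1, hc1⟩
  obtain ⟨r, hr1, hr2⟩ := (hev1.and hev2).exists
  obtain ⟨y, ⟨hyball, hyU⟩, hy⟩ := hr1
  have hptU : pt r φ ∈ UU := pt_mem hr2.1 φ
  have heq : y = pt r φ := hb.injOn hyU hptU hy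
  rw [heq] at hyball
  have hdist : dist (pt r φ) u < s := mem_ball.1 hyball
  have htri : ‖u‖ - ‖pt r φ‖ ≤ ‖u - pt r φ‖ := by
    simpa using norm_sub_norm_le u (pt r φ)
  rw [Complex.dist_eq] at hdist
  have habs : ‖u - pt r φ‖ = ‖pt r φ - u‖ := by
    rw [norm_sub_rev]
  rw [abs_pt (by linarith [hr2.1] : (0:ℝ) ≤ r)] at htri
  have : ‖u‖ - r < s := by rw [habs] at htri; linarith
  have hrc : r < c := hr2.2
  simp only [hs_def, hc_def] at *
  linarith






lemma lands_congr {θ θ' : ℝ} {x : ℂ} (h : (θ : AddCircle (1:ℝ)) = (θ' : AddCircle (1:ℝ)))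
    (hl : Lands ψ θ x) : Lands ψ θ' x := by
  have heq : (fun r : ℝ => ψ (pt r θ')) = fun r : ℝ => ψ (pt r θ) := by
    funext r; exact congrArg ψ (pt_eq_pt_of_circle h.symm)
  show Filter.Tendsto (fun r : ℝ => ψ (pt r θ')) _ _
  rw [heq]; exact hl

lemma sep_line_subset {Γ : Set ℂ} {θ₁ θ₂ : ℝ} {z₁ z₂ : ℂ}
    (hz₁K : z₁ ∈ K) (hz₂K : z₂ ∈ K)
    (hcase : (z₁ = z₂ ∧ Γ = rayImg ψ θ₁ ∪ rayImg ψ θ₂ ∪ {z₁}) ∨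
     (z₁ ≠ z₂ ∧ ∃ σ : ℝ → ℂ,
        ContinuousOn σ (Set.Icc 0 1) ∧ Set.InjOn σ (Set.Icc 0 1) ∧
        σ 0 = z₁ ∧ σ 1 = z₂ ∧ σ '' Set.Ioo 0 1 ⊆ interior K ∧
        Γ = rayImg ψ θ₁ ∪ rayImg ψ θ₂ ∪ σ '' Set.Icc 0 1)) :
    Γ ⊆ rayImg ψ θ₁ ∪ rayImg ψ θ₂ ∪ K := by
  rcases hcase with ⟨_, rfl⟩ | ⟨_, σ, _, _, hσ0, hσ1, hσint, rfl⟩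
  · refine union_subset (union_subset ?_ ?_) ?_
    · exact fun x hx => Or.inl (Or.inl hx)
    · exact fun x hx => Or.inl (Or.inr hx)
    · intro x hx; rw [mem_singleton_iff] at hx; exact Or.inr (hx ▸ hz₁K)
  · refine union_subset (union_subset ?_ ?_) ?_
    · exact fun x hx => Or.inl (Or.inl hx)
    · exact fun x hx => Or.inl (Or.inr hx)
    · rintro x ⟨t, ht, rfl⟩
      right
      rcases eq_or_lt_of_le ht.1 with h0 | h0
    -- t = 0
      · rw [← h0, hσ0]; exact hz₁K
      rcases eq_or_lt_of_le ht.2 with h1 | h1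
      · rw [h1, hσ1]; exact hz₂K
      · exact interior_subset (hσint ⟨t, ⟨h0, h1⟩, rfl⟩)

lemma z_mem_sep (hΓcase : (z₁ = z₂ ∧ Γ = rayImg ψ θ₁ ∪ rayImg ψ θ₂ ∪ ({z₁} : Set ℂ)) ∨
     (z₁ ≠ z₂ ∧ ∃ σ : ℝ → ℂ,
        ContinuousOn σ (Set.Icc 0 1) ∧ Set.InjOn σ (Set.Icc 0 1) ∧
        σ 0 = z₁ ∧ σ 1 = z₂ ∧ σ '' Set.Ioo 0 1 ⊆ interior K ∧
        Γ = rayImg ψ θ₁ ∪ rayImg ψ θ₂ ∪ σ '' Set.Icc 0 1)) :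
    z₁ ∈ Γ ∧ z₂ ∈ Γ := by
  rcases hΓcase with ⟨heq, rfl⟩ | ⟨_, σ, _, _, hσ0, hσ1, _, rfl⟩
  · constructor
    · exact Or.inr rfl
    · exact Or.inr (by rw [← heq]; rfl)
  · constructor
    · exact Or.inr ⟨0, ⟨le_refl 0, zero_le_one⟩, hσ0⟩
    · exact Or.inr ⟨1, ⟨zero_le_one, le_refl 1⟩, hσ1⟩

lemma component_eq (hb : Set.BijOn ψ UU Kᶜ) (hd : DifferentiableOn ℂ ψ UU)
    {θ : ℝ} {Γ : Set ℂ} {θ₁ θ₂ : ℝ}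
    (hd₁ : (θ : AddCircle (1:ℝ)) ≠ (θ₁ : AddCircle (1:ℝ)))
    (hd₂ : (θ : AddCircle (1:ℝ)) ≠ (θ₂ : AddCircle (1:ℝ)))
    (hΓsub : Γ ⊆ rayImg ψ θ₁ ∪ rayImg ψ θ₂ ∪ K)
    {x y : ℂ} (hxΓ : x ∉ Γ) (hyΓ : y ∉ Γ)
    (hx : ∀ ε > 0, x ∈ closure (SF ψ θ ε)) (hy : ∀ ε > 0, y ∈ closure (SF ψ θ ε)) :
    connectedComponentIn Γᶜ x = connectedComponentIn Γᶜ y := by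
  classical
  -- choose ε avoiding θ₁, θ₂ mod 1
  set Zs : Set ℝ := (fun φ : ℝ => (φ : AddCircle (1:ℝ))) ⁻¹'
      {(θ₁ : AddCircle (1:ℝ)), (θ₂ : AddCircle (1:ℝ))} with hZs_def
  have hZclosed : IsClosed Zs := by
    refine IsClosed.preimage (AddCircle.continuous_mk' 1) ?_
    exact (Set.toFinite _).isClosed
  have hθZ : θ ∉ Zs := by
    simp only [Zs, mem_preimage, mem_insert_iff, mem_singleton_iff]
    push_neg
    exact ⟨hd₁, hd₂⟩
  obtain ⟨ε, hε, hball⟩ := Metric.isOpen_iff.1 hZclosed.isOpen_compl θ hθZ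
  have hangle : ∀ φ : ℝ, φ ∈ Set.Ioo (θ - ε) (θ + ε) →
      (φ : AddCircle (1:ℝ)) ≠ (θ₁ : AddCircle (1:ℝ)) ∧
      (φ : AddCircle (1:ℝ)) ≠ (θ₂ : AddCircle (1:ℝ)) := by
    intro φ hφ
    have : φ ∈ Metric.ball θ ε := by
      rw [mem_ball, Real.dist_eq, abs_lt]
      exact ⟨by linarith [hφ.1], by linarith [hφ.2]⟩
    have := hball this
    simp only [mem_compl_iff, Zs, mem_preimage, mem_insert_iff, mem_singleton_iff] at this
    push_neg at this
    exact this
  -- SF avoids Γ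
  have hdisj : ∀ p ∈ SF ψ θ ε, p ∉ Γ := by
    rintro p ⟨⟨r, φ⟩, ⟨hr, hφ⟩, rfl⟩ hpΓ
    simp only [mem_Ioi] at hr
    rcases hΓsub hpΓ with (hray | hray) | hKmem
    · obtain ⟨r', hr', heq⟩ := hray
      simp only [mem_Ioi] at hr'
      have : pt r' θ₁ = pt r φ := hb.injOn (pt_mem hr' θ₁) (pt_mem hr φ) heq
      have h2 := (circle_eq_of_pt_eq (by linarith) (by linarith) this).2
      exact (hangle φ hφ).1 h2.symm
    · obtain ⟨r', hr', heq⟩ := hray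
      simp only [mem_Ioi] at hr'
      have : pt r' θ₂ = pt r φ := hb.injOn (pt_mem hr' θ₂) (pt_mem hr φ) heq
      have h2 := (circle_eq_of_pt_eq (by linarith) (by linarith) this).2
      exact (hangle φ hφ).2 h2.symm
    · exact (hb.mapsTo (pt_mem hr φ)) hKmem
  -- the connected bridge
  set T : Set ℂ := SF ψ θ ε ∪ {x, y} with hT_def
  have hTpre : IsPreconnected T := by
    refine (SF_preconnected hd).subset_closure subset_union_left ?_
    refine union_subset subset_closure ?_
    intro p hp
    rcases hp with rfl | hp
    · exact hx ε hε
    · rw [mem_singleton_iff] at hp; exact hp ▸ hy ε hε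
  have hTsub : T ⊆ Γᶜ := by
    refine union_subset (fun p hp => hdisj p hp) ?_
    intro p hp
    rcases hp with rfl | hp
    · exact hxΓ
    · rw [mem_singleton_iff] at hp; exact hp ▸ hyΓ
  have hxT : x ∈ T := Or.inr (Or.inl rfl)
  have hyT : y ∈ T := Or.inr (Or.inr rfl)
  have := hTpre.subset_connectedComponentIn hxT hTsub
  exact connectedComponentIn_eq (this hyT)

lemma master (hK : IsCompact K) (hb : Set.BijOn ψ UU Kᶜ) (hd : DifferentiableOn ℂ ψ UU)
    {lam : ℝ} (hlam : 0 < lam)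
    (ht : Filter.Tendsto (fun z : ℂ => ψ z / z) (Filter.comap (fun z : ℂ => ‖z‖) Filter.atTop)
      (nhds (lam : ℂ))) (θ : ℝ) :
    ∃ P : Set ℂ, IsPreconnected P ∧ P ⊆ K ∧ impression K ψ θ ⊆ P ∧
      (∀ z : ℂ, Lands ψ θ z → z ∈ P) ∧
      (∀ x ∈ P, ∀ ε > 0, x ∈ closure (SF ψ θ ε)) := by
  classical
  obtain ⟨R₀, hR₀2, hgrowth⟩ := growth hlam ht
  obtain ⟨Rb, hRb⟩ := bounded_near hb hd hK hR₀2 hlam hgrowth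
  set E : ℕ → Set ℂ := fun n => closure (SS ψ θ (1/((n:ℝ)+1)) (1/((n:ℝ)+1))) with hE_def
  have hpos : ∀ n : ℕ, (0:ℝ) < 1/((n:ℝ)+1) := fun n => by positivity
  have hle1 : ∀ n : ℕ, 1/((n:ℝ)+1) ≤ 1 := fun n => by
    rw [div_le_one (by positivity)]; simp
  have hEcomp : ∀ n, IsCompact (E n) := fun n =>
    SS_closure_compact hRb (le_trans (hle1 n) one_le_two)
  have hEconn : ∀ n, IsPreconnected (E n) := fun n => (SS_preconnected hd).closure
  have hEne : ∀ n, (E n).Nonempty := fun n =>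
    ((SS_nonempty (hpos n) (hpos n)).mono subset_closure)
  have hEanti : ∀ m n : ℕ, m ≤ n → E n ⊆ E m := by
    intro m n hmn
    refine closure_mono (SS_mono ?_ ?_) <;>
    · refine one_div_le_one_div_of_le (by positivity) ?_
      have : (m:ℝ) ≤ n := Nat.cast_le.2 hmn
      linarith
  set P : Set ℂ := ⋂ n, E n with hP_def
  have hPK : P ⊆ K := by
    intro p hp
    by_contra hpK
    obtain ⟨u, huU, hup⟩ := hb.surjOn (show p ∈ Kᶜ from hpK)
    have habs : ∀ n : ℕ, ‖u‖ ≤ 1 + 1/((n:ℝ)+1) := by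
      intro n
      have hmem : p ∈ closure (SS ψ θ (1/((n:ℝ)+1)) (1/((n:ℝ)+1))) := mem_iInter.1 hp n
      have himg : SS ψ θ (1/((n:ℝ)+1)) (1/((n:ℝ)+1)) =
          ψ '' ((fun q : ℝ × ℝ => pt q.1 q.2) ''
            (Set.Ioo 1 (1+1/((n:ℝ)+1)) ×ˢ Set.Ioo (θ-1/((n:ℝ)+1)) (θ+1/((n:ℝ)+1)))) := by
        rw [Set.image_image]; rfl
      set A : Set ℂ := (fun q : ℝ × ℝ => pt q.1 q.2) ''
            (Set.Ioo 1 (1+1/((n:ℝ)+1)) ×ˢ Set.Ioo (θ-1/((n:ℝ)+1)) (θ+1/((n:ℝ)+1))) with hA_def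
      have hAU : A ⊆ UU := by
        rintro v ⟨⟨r, φ⟩, ⟨hr, _⟩, rfl⟩
        exact pt_mem hr.1 φ
      have hAbd : A ⊆ {v : ℂ | ‖v‖ ≤ 1 + 1/((n:ℝ)+1)} := by
        rintro v ⟨⟨r, φ⟩, ⟨hr, _⟩, rfl⟩
        simp only [mem_setOf_eq]
        rw [abs_pt (by linarith [hr.1] : (0:ℝ) ≤ r)]
        exact hr.2.le
      rw [himg] at hmem
      obtain ⟨u', ⟨hu'cl, hu'U⟩, hu'p⟩ := mem_image_closure hb hd hAU hmem hpK
      have : u' = u := hb.injOn hu'U huU (by rw [hu'p, hup])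
      rw [← this]
      have : closure A ⊆ {v : ℂ | ‖v‖ ≤ 1 + 1/((n:ℝ)+1)} :=
        closure_minimal hAbd (isClosed_le continuous_norm continuous_const)
      exact this hu'cl
    have h1 : ‖u‖ ≤ 1 := by
      by_contra hgt
      push_neg at hgt
      obtain ⟨n, hn⟩ := exists_nat_one_div_lt (show (0:ℝ) < ‖u‖ - 1 by linarith)
      have := habs n
      linarith
    exact absurd h1 (not_le.2 huU)
  have hPSF : ∀ x ∈ P, ∀ ε > 0, x ∈ closure (SF ψ θ ε) := by
    intro x hx ε hε
    obtain ⟨n, hn⟩ := exists_nat_one_div_lt hε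
    have h1 : x ∈ E n := mem_iInter.1 hx n
    have h2 : closure (SS ψ θ (1/((n:ℝ)+1)) (1/((n:ℝ)+1))) ⊆ closure (SF ψ θ ε) :=
      closure_mono (subset_trans SS_subset_SF (SF_mono hn.le))
    exact h2 h1
  refine ⟨P, ?_, hPK, ?_, ?_, hPSF⟩
  · exact preconnected_iInter hEcomp hEconn hEne hEanti
  · -- impression ⊆ P
    intro w hw
    rw [hP_def, mem_iInter]
    intro n
    have h1 : w ∈ closure (⋃ (φ : ℝ) (_ : |φ - θ| < 1/((n:ℝ)+1)), limitSet K ψ φ) := by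
      have := mem_iInter.1 hw (1/((n:ℝ)+1))
      exact mem_iInter.1 this (hpos n)
    refine closure_minimal ?_ isClosed_closure h1
    intro x hx
    simp only [mem_iUnion] at hx
    obtain ⟨φ, hφ, hxL⟩ := hx
    have hsub : closure (rayImg ψ φ) ⊆ closure (SF ψ θ (1/((n:ℝ)+1))) :=
      closure_mono (ray_subset_SF hφ)
    exact closure_SF_inter_K_subset hb hd hK hlam hR₀2 hgrowth (hpos n)
      ⟨hsub hxL.1, hxL.2⟩
  · -- landing point in P
    intro z hz
    rw [hP_def, mem_iInter]
    intro n
    have hz' : Filter.Tendsto (fun r : ℝ => ψ (pt r θ)) (nhdsWithin 1 (Set.Ioi 1)) (nhds z) := hz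
    have hev : ∀ᶠ r in nhdsWithin (1:ℝ) (Set.Ioi 1),
        ψ (pt r θ) ∈ SS ψ θ (1/((n:ℝ)+1)) (1/((n:ℝ)+1)) := by
      filter_upwards [Ioo_mem_nhdsGT_of_mem
        (⟨le_refl (1:ℝ), by linarith [hpos n]⟩ : (1:ℝ) ∈ Set.Ico 1 (1+1/((n:ℝ)+1)))] with r hr
      exact ⟨(r, θ), ⟨hr, ⟨by linarith [hpos n], by linarith [hpos n]⟩⟩, rfl⟩
    exact mem_closure_of_tendsto hz' hev


end ImpAux

/-- Let `K ⊂ ℂ` be compact, connected and full, with fibers defined with respect to a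
countable set `Q` of external angles whose rays land. If an external ray lands at a
point `z`, its impression is contained in the fiber of `z`; and for a ray whose angle is
not in `Q` (mod 1), the impression is contained in the fiber of each of its points. -/
theorem impression_in_fiber (K : Set ℂ) (ψ : ℂ → ℂ) (Q : Set ℝ)
    (hK : IsCompact K) (hconn : IsConnected K) (hfull : IsFull K)
    (hψ : IsRiemannMap K ψ) (hQ : Q.Countable)
    (hQland : ∀ θ ∈ Q, ∃ w : ℂ, Lands ψ θ w) :
    (∀ θ : ℝ, ∀ z : ℂ, Lands ψ θ z → impression K ψ θ ⊆ fiber K ψ Q z) ∧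
    (∀ θ : ℝ, (∀ q ∈ Q, (θ : AddCircle (1 : ℝ)) ≠ (q : AddCircle (1 : ℝ))) →
      ∀ w ∈ impression K ψ θ, impression K ψ θ ⊆ fiber K ψ Q w) := by
  obtain ⟨hb, hd, lam, hlam, ht⟩ := hψ
  constructor
  · intro θ z hz w hw
    obtain ⟨P, hPpre, hPK, hPimp, hPland, hPSF⟩ := ImpAux.master hK hb hd hlam ht θ
    have hzP : z ∈ P := hPland z hz
    have hPF : P ⊆ {w' | w' ∈ K ∧ ¬ Separates K ψ Q z w'} := by
      intro v hv
      refine ⟨hPK hv, ?_⟩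
      rintro ⟨Γ, ⟨θ₁, hθ₁Q, θ₂, hθ₂Q, z₁, z₂, hl₁, hl₂, hne12, hcase⟩, hzΓ, hvΓ, hnecomp⟩
      have hz₁K : z₁ ∈ K := ImpAux.lands_mem_K hb hd hl₁
      have hz₂K : z₂ ∈ K := ImpAux.lands_mem_K hb hd hl₂
      obtain ⟨hz₁Γ, hz₂Γ⟩ := ImpAux.z_mem_sep hcase
      have hd₁ : (θ : AddCircle (1:ℝ)) ≠ (θ₁ : AddCircle (1:ℝ)) := by
        intro h
        have : z = z₁ := tendsto_nhds_unique hz (ImpAux.lands_congr h.symm hl₁)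
        exact hzΓ (this ▸ hz₁Γ)
      have hd₂ : (θ : AddCircle (1:ℝ)) ≠ (θ₂ : AddCircle (1:ℝ)) := by
        intro h
        have : z = z₂ := tendsto_nhds_unique hz (ImpAux.lands_congr h.symm hl₂)
        exact hzΓ (this ▸ hz₂Γ)
      exact hnecomp (ImpAux.component_eq hb hd hd₁ hd₂ (ImpAux.sep_line_subset hz₁K hz₂K hcase)
        hzΓ hvΓ (hPSF z hzP) (hPSF v hv))
    exact (hPpre.subset_connectedComponentIn hzP hPF) (hPimp hw)
  · intro θ hθQ w hw w' hw'
    obtain ⟨P, hPpre, hPK, hPimp, hPland, hPSF⟩ := ImpAux.master hK hb hd hlam ht θ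
    have hwP : w ∈ P := hPimp hw
    have hPF : P ⊆ {v | v ∈ K ∧ ¬ Separates K ψ Q w v} := by
      intro v hv
      refine ⟨hPK hv, ?_⟩
      rintro ⟨Γ, ⟨θ₁, hθ₁Q, θ₂, hθ₂Q, z₁, z₂, hl₁, hl₂, hne12, hcase⟩, hwΓ, hvΓ, hnecomp⟩
      have hz₁K : z₁ ∈ K := ImpAux.lands_mem_K hb hd hl₁
      have hz₂K : z₂ ∈ K := ImpAux.lands_mem_K hb hd hl₂
      exact hnecomp (ImpAux.component_eq hb hd (hθQ θ₁ hθ₁Q) (hθQ θ₂ hθ₂Q)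
        (ImpAux.sep_line_subset hz₁K hz₂K hcase) hwΓ hvΓ (hPSF w hwP) (hPSF v hv))
    exact (hPpre.subset_connectedComponentIn hwP hPF) (hPimp hw')
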